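/- Let G be a graph on n ≥ 2 vertices. Then G has a Hamiltonian path if and only if the line graph L(G) contains an induced path on n−1 vertices. -/

import Mathlib

open SimpleGraph

/-- `G` has a Hamiltonian path: a path visiting every vertex of `G` exactly once. -/
def HasHamPath {V : Type} (G : SimpleGraph V) : Prop :=
  ∃ (u v : V) (w : G.Walk u v), w.IsPath ∧ ∀ x : V, x ∈ w.support

namespace StmtAux

variable {V : Type} {G : SimpleGraph V}

lemma getVert_mem_support {u v : V} (w : G.Walk u v) (i : ℕ) :
    w.getVert i ∈ w.support := by
  induction w generalizing i with
  | nil => cases i <;> simp [Walk.getVert]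
  | cons h p ih =>
    cases i with
    | zero => simp
    | succ n =>
      rw [Walk.getVert_cons_succ, Walk.support_cons]
      exact List.mem_cons_of_mem _ (ih n)

lemma getVert_injOn {u v : V} {w : G.Walk u v} (hw : w.IsPath) :
    ∀ i ≤ w.length, ∀ j ≤ w.length, w.getVert i = w.getVert j → i = j := by
  induction w with
  | nil => intro i hi j hj _; simp_all
  | cons h p ih =>
    rw [Walk.cons_isPath_iff] at hw
    intro i hi j hj hij
    rw [Walk.length_cons] at hi hj
    cases i with
    | zero =>
      cases j with
      | zero => rfl
      | succ jj =>
        exfalso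
        rw [Walk.getVert_zero, Walk.getVert_cons_succ] at hij
        exact hw.2 (hij ▸ getVert_mem_support p jj)
    | succ ii =>
      cases j with
      | zero =>
        exfalso
        rw [Walk.getVert_zero, Walk.getVert_cons_succ] at hij
        exact hw.2 (hij ▸ getVert_mem_support p ii)
      | succ jj =>
        rw [Walk.getVert_cons_succ, Walk.getVert_cons_succ] at hij
        have := ih hw.1 ii (by omega) jj (by omega) hij
        omega

lemma other'_ne [DecidableEq V] {a : V} {z : Sym2 V} (hd : ¬ z.IsDiag) (h : a ∈ z) :
    Sym2.Mem.other' h ≠ a := by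
  rw [← Sym2.other_eq_other']; exact Sym2.other_ne hd h

lemma sym2_exists_mem (z : Sym2 V) : ∃ x, x ∈ z := by
  induction z using Sym2.ind with
  | _ a b => exact ⟨a, by simp⟩

end StmtAux

open StmtAux in
theorem stmt_2 {V : Type} [Fintype V] (G : SimpleGraph V) (hn : 2 ≤ Fintype.card V) :
    HasHamPath G ↔
      Nonempty (pathGraph (Fintype.card V - 1) ↪g G.lineGraph) := by
  classical
  set n := Fintype.card V with hndef
  constructor
  · rintro ⟨u, v, w, hp, hall⟩
    have hsupp : w.support.length = n := by
      have h1 : w.support.toFinset = Finset.univ := by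
        ext x; simp [hall x]
      have h2 := List.toFinset_card_of_nodup hp.support_nodup
      rw [h1, Finset.card_univ] at h2
      omega
    have hlen : w.length = n - 1 := by
      have := w.length_support; omega
    have hgi : ∀ i j : ℕ, i ≤ w.length → j ≤ w.length →
        w.getVert i = w.getVert j → i = j := fun i j hi hj => getVert_injOn hp i hi j hj
    refine ⟨⟨⟨fun i => ⟨s(w.getVert i, w.getVert (i+1)),
        G.mem_edgeSet.mpr (w.adj_getVert_succ (by omega))⟩, ?_⟩, ?_⟩⟩
    · intro i j hij
      simp only [Subtype.mk.injEq, Sym2.eq_iff] at hij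
      have hi : (i : ℕ) + 1 ≤ w.length := by omega
      have hj : (j : ℕ) + 1 ≤ w.length := by omega
      rcases hij with ⟨h1, _⟩ | ⟨h1, h2⟩
      · exact Fin.ext (hgi _ _ (by omega) (by omega) h1)
      · have e1 := hgi _ _ (by omega) (by omega) h1
        have e2 := hgi _ _ (by omega) (by omega) h2
        omega
    · intro i j
      have hi : (i : ℕ) + 1 ≤ w.length := by omega
      have hj : (j : ℕ) + 1 ≤ w.length := by omega
      change G.lineGraph.Adj ⟨s(w.getVert i, w.getVert (i+1)), _⟩ ⟨s(w.getVert j, w.getVert (j+1)), _⟩ ↔ _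
      simp only [Function.Embedding.coeFn_mk, lineGraph_adj_iff_exists, ne_eq,
        Subtype.mk.injEq, pathGraph_adj, Sym2.eq_iff, Sym2.mem_iff]
      constructor
      · rintro ⟨hne, x, hx1, hx2⟩
        have hijne : (i : ℕ) ≠ (j : ℕ) := by
          intro h
          have h' : i = j := Fin.ext h
          subst h'
          exact hne (Or.inl ⟨rfl, rfl⟩)
        rcases hx1 with h1 | h1 <;> rcases hx2 with h2 | h2 <;>
          · have := hgi _ _ (by omega) (by omega) (h1.symm.trans h2)
            omega
      · rintro (h | h)
        · refine ⟨?_, w.getVert ((i : ℕ) + 1), Or.inr rfl, Or.inl (by rw [h])⟩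
          rintro (⟨h1, h2⟩ | ⟨h1, h2⟩)
          · have := hgi _ _ (by omega) (by omega) h1; omega
          · have := hgi _ _ (by omega) (by omega) h1; omega
        · refine ⟨?_, w.getVert ((j : ℕ) + 1), Or.inl (by rw [h]), Or.inr rfl⟩
          rintro (⟨h1, h2⟩ | ⟨h1, h2⟩)
          · have := hgi _ _ (by omega) (by omega) h1; omega
          · have := hgi _ _ (by omega) (by omega) h2; omega
  · rintro ⟨f⟩
    set m := n - 1 with hmdef
    have hm1 : 1 ≤ m := by omega
    obtain ⟨x0⟩ : Nonempty V := Fintype.card_pos_iff.mp (by omega)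
    set E : ℕ → Sym2 V := fun i => if h : i < m then (f ⟨i, h⟩ : Sym2 V) else s(x0, x0)
      with hEdef
    have hEval : ∀ i (h : i < m), E i = (f ⟨i, h⟩ : Sym2 V) := by
      intro i h; simp only [hEdef, dif_pos h]
    have hmem : ∀ i, i < m → E i ∈ G.edgeSet := by
      intro i h; rw [hEval i h]; exact (f ⟨i, h⟩).2
    have hinj : ∀ i j, i < m → j < m → E i = E j → i = j := by
      intro i j hi hj h
      rw [hEval i hi, hEval j hj] at h
      have := f.injective (Subtype.ext h)
      exact congrArg Fin.val this
    have hshared : ∀ i j, i < m → j < m → i ≠ j →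
        (∃ x, x ∈ E i ∧ x ∈ E j) → (i + 1 = j ∨ j + 1 = i) := by
      intro i j hi hj hne ⟨x, hx1, hx2⟩
      have hfne : f ⟨i, hi⟩ ≠ f ⟨j, hj⟩ := by
        intro h
        exact hne (congrArg Fin.val (f.injective h))
      have hadj : (G.lineGraph).Adj (f ⟨i, hi⟩) (f ⟨j, hj⟩) :=
        lineGraph_adj_iff_exists.mpr ⟨hfne, x, hEval i hi ▸ hx1, hEval j hj ▸ hx2⟩
      have := f.map_rel_iff.mp hadj
      rw [pathGraph_adj] at this
      exact this
    have hconsec : ∀ i, i + 1 < m → ∃ x, x ∈ E i ∧ x ∈ E (i + 1) := by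
      intro i h
      have hadj : (pathGraph m).Adj ⟨i, by omega⟩ ⟨i + 1, h⟩ := by
        rw [pathGraph_adj]; exact Or.inl rfl
      have := f.map_rel_iff.mpr hadj
      rw [lineGraph_adj_iff_exists] at this
      obtain ⟨-, x, hx1, hx2⟩ := this
      exact ⟨x, (hEval i (by omega)).symm ▸ hx1, (hEval (i + 1) h).symm ▸ hx2⟩
    set c : ℕ → V := fun i => if h : i + 1 < m then (hconsec i h).choose else x0 with hcdef
    have hc : ∀ i (h : i + 1 < m), c i ∈ E i ∧ c i ∈ E (i + 1) := by
      intro i h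
      have := (hconsec i h).choose_spec
      simpa only [hcdef, dif_pos h] using this
    obtain ⟨a0, ha0, ha0'⟩ : ∃ a, a ∈ E 0 ∧ (2 ≤ m → a ∈ E 1) := by
      by_cases h2 : 2 ≤ m
      · exact ⟨c 0, (hc 0 (by omega)).1, fun _ => (hc 0 (by omega)).2⟩
      · obtain ⟨a, ha⟩ := sym2_exists_mem (E 0)
        exact ⟨a, ha, fun h => absurd h h2⟩
    set v : ℕ → V := fun i => Nat.rec (Sym2.Mem.other' ha0)
      (fun i vi => if h : vi ∈ E i then Sym2.Mem.other' h else vi) i with hvdef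
    have hv0 : v 0 = Sym2.Mem.other' ha0 := rfl
    have hvs : ∀ i, v (i + 1) = if h : v i ∈ E i then Sym2.Mem.other' h else v i :=
      fun i => rfl
    have key : ∀ i, i < m → v i ∈ E i := by
      intro i
      induction i using Nat.strong_induction_on with
      | _ i ih =>
        match i with
        | 0 => exact fun _ => hv0 ▸ Sym2.other_mem' ha0
        | (k + 1) =>
          intro h
          have hk : v k ∈ E k := ih k (by omega) (by omega)
          have hva : v (k + 1) = Sym2.Mem.other' hk := by rw [hvs k, dif_pos hk]
          have hspec : E k = s(v k, v (k + 1)) := by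
            rw [hva]; exact (Sym2.other_spec' hk).symm
          obtain ⟨hck1, hck2⟩ := hc k h
          have : c k = v k ∨ c k = v (k + 1) := by
            rw [hspec, Sym2.mem_iff] at hck1; exact hck1
          rcases this with hck | hck
          · exfalso
            cases k with
            | zero =>
              -- c 0 = v 0, but v 0 and a0 are two distinct elements of both E 0 and E 1
              have hvE1 : v 0 ∈ E 1 := hck ▸ hck2
              have hvne : v 0 ≠ a0 := hv0 ▸
                other'_ne (G.not_isDiag_of_mem_edgeSet (hmem 0 (by omega))) ha0
              have haE1 : a0 ∈ E 1 := ha0' (by omega)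
              have : E 0 = E 1 :=
                Sym2.eq_of_ne_mem hvne (hv0 ▸ Sym2.other_mem' ha0) ha0 hvE1 haE1
              exact absurd (hinj 0 1 (by omega) (by omega) this) (by omega)
            | succ j =>
              have hj : v j ∈ E j := ih j (by omega) (by omega)
              have hvj : v (j + 1) ∈ E j := by
                rw [hvs j, dif_pos hj]; exact Sym2.other_mem' hj
              have hvj2 : v (j + 1) ∈ E (j + 2) := hck ▸ hck2
              have hEne : E j ≠ E (j + 2) := fun hE =>
                absurd (hinj j (j + 2) (by omega) (by omega) hE) (by omega)
              have := hshared j (j + 2) (by omega) (by omega) (by omega)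
                ⟨v (j + 1), hvj, hvj2⟩
              omega
          · exact hck ▸ hck2
    have spec : ∀ i, i < m → E i = s(v i, v (i + 1)) := by
      intro i h
      have hk := key i h
      rw [hvs i, dif_pos hk]
      exact (Sym2.other_spec' hk).symm
    have hadjv : ∀ i, i < m → G.Adj (v i) (v (i + 1)) := by
      intro i h
      exact G.mem_edgeSet.mp (spec i h ▸ hmem i h)
    have hne_succ : ∀ i, i < m → v (i + 1) ≠ v i := fun i h => (hadjv i h).ne'
    have core : ∀ i j, i < j → j ≤ m → v i ≠ v j := by
      intro i j hij hj heq
      have hi : i < m := by omega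
      have hvi : v i ∈ E i := key i hi
      have hj1 : j - 1 < m := by omega
      have hj0 : j - 1 + 1 = j := by omega
      have hsp := spec (j - 1) hj1
      rw [hj0] at hsp
      have hvj : v j ∈ E (j - 1) := by rw [hsp, Sym2.mem_iff]; exact Or.inr rfl
      by_cases hcase : i = j - 1
      · have := hne_succ (j - 1) hj1
        rw [hj0] at this
        exact this (hcase ▸ heq).symm
      · have := hshared i (j - 1) hi hj1 hcase ⟨v i, hvi, heq ▸ hvj⟩
        have hj2 : j = i + 2 := by omega
        subst hj2
        have hi1 : i + 1 < m := by omega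
        have h1 : v (i + 1) ∈ E i := by rw [spec i hi, Sym2.mem_iff]; exact Or.inr rfl
        have h2 : v (i + 1) ∈ E (i + 1) := key (i + 1) hi1
        have h3 : v i ∈ E (i + 1) := by
          rw [spec (i + 1) hi1, Sym2.mem_iff, heq]; exact Or.inr rfl
        have hne : v i ≠ v (i + 1) := (hne_succ i hi).symm
        have : E i = E (i + 1) := Sym2.eq_of_ne_mem hne hvi h1 h3 h2
        exact absurd (hinj i (i + 1) hi hi1 this) (by omega)
    have vinj : ∀ i j, i ≤ m → j ≤ m → v i = v j → i = j := by
      intro i j hi hj heq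
      rcases lt_trichotomy i j with h | h | h
      · exact absurd heq (core i j h hj)
      · exact h
      · exact absurd heq.symm (core j i h hi)
    have wcl : ∀ i, i ≤ m → ∃ w : G.Walk (v 0) (v i),
        w.support = (List.range (i + 1)).map v := by
      intro i
      induction i with
      | zero => exact fun _ => ⟨Walk.nil, by simp [List.range_succ]⟩
      | succ k ih =>
        intro h
        obtain ⟨w, hw⟩ := ih (by omega)
        refine ⟨w.concat (hadjv k (by omega)), ?_⟩
        rw [Walk.support_concat, hw, List.range_succ]
        simp [List.range_succ]
    obtain ⟨w, hw⟩ := wcl m le_rfl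
    refine ⟨v 0, v m, w, ?_, ?_⟩
    · rw [Walk.isPath_def, hw]
      refine List.Nodup.map_on ?_ List.nodup_range
      intro x hx y hy hxy
      rw [List.mem_range] at hx hy
      exact vinj x y (by omega) (by omega) hxy
    · intro x
      have hvinj : Function.Injective (fun i : Fin (m + 1) => v i) := by
        intro a b hab
        exact Fin.ext (vinj a b (by omega) (by omega) hab)
      have hsurj : Function.Surjective (fun i : Fin (m + 1) => v i) := by
        have hcard : Fintype.card (Fin (m + 1)) = Fintype.card V := by
          simp; omega
        exact (Fintype.bijective_iff_injective_and_card _).mpr ⟨hvinj, hcard⟩ |>.2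
      obtain ⟨i, hi⟩ := hsurj x
      rw [hw, List.mem_map]
      exact ⟨i, List.mem_range.mpr i.2, hi⟩
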